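/- Let 𝔐 = (M, ⊕, ⪯, 0) be a distance monoid with only finitely many blocks and let S be a finite subset of M ∖ {0}. Then there exists an integer n = n(S) such that for every ℓ ∈ S and every finite sequence e_1, e_2, …, e_k of elements of S with ℓ ≻ e_1 ⊕ e_2 ⊕ ⋯ ⊕ e_k, there is a sequence f_1, f_2, …, f_m of elements of S satisfying: (1) (f_i) is a subsequence of (e_i) (obtained by deleting some terms while preserving order); (2) m < n; and (3) if (f_i) is a proper subsequence of (e_i) and a is the ⪯-largest deleted term, then for every b in the block of a (i.e., every b with b ~ a) one has ℓ ≻ b ⊕ f_1 ⊕ f_2 ⊕ ⋯ ⊕ f_m. -/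

import Mathlib

/-- The block relation `a ~ b`: there are positive integers `m, n` with `b ⪯ m × a`
and `a ⪯ n × b`. -/
def blockRel {M : Type*} [AddCommMonoid M] [LinearOrder M] (a b : M) : Prop :=
  (∃ m : ℕ, 0 < m ∧ b ≤ m • a) ∧ (∃ n : ℕ, 0 < n ∧ a ≤ n • b)

section Aux

variable {M : Type*} [AddCommMonoid M] [LinearOrder M]

private lemma aux_smul_le_smul (hmono : ∀ a b c d : M, a ≤ c → b ≤ d → a + b ≤ c + d)
    {a b : M} (h : a ≤ b) : ∀ k : ℕ, k • a ≤ k • b := by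
  intro k
  induction k with
  | zero => simp
  | succ k ih =>
      rw [succ_nsmul, succ_nsmul]
      exact hmono _ _ _ _ ih h

private lemma aux_le_add_right (hzero : ∀ a : M, 0 ≤ a)
    (hmono : ∀ a b c d : M, a ≤ c → b ≤ d → a + b ≤ c + d) (a b : M) : a ≤ a + b := by
  calc a = a + 0 := (add_zero a).symm
  _ ≤ a + b := hmono _ _ _ _ le_rfl (hzero b)

private lemma aux_smul_le_smul_nat (hzero : ∀ a : M, 0 ≤ a)
    (hmono : ∀ a b c d : M, a ≤ c → b ≤ d → a + b ≤ c + d)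
    {k k' : ℕ} (h : k ≤ k') (a : M) : k • a ≤ k' • a := by
  obtain ⟨d, rfl⟩ := Nat.exists_eq_add_of_le h
  rw [add_nsmul]
  exact aux_le_add_right hzero hmono _ _

private lemma aux_length_smul_le_sum
    (hmono : ∀ a b c d : M, a ≤ c → b ≤ d → a + b ≤ c + d) {c : M} :
    ∀ l : List M, (∀ y ∈ l, c ≤ y) → l.length • c ≤ l.sum := by
  intro l
  induction l with
  | nil => simp
  | cons y l ih =>
      intro h
      rw [List.sum_cons, List.length_cons, succ_nsmul]
      calc l.length • c + c ≤ l.sum + y :=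
            hmono _ _ _ _ (ih fun z hz => h z (List.mem_cons_of_mem _ hz))
              (h y List.mem_cons_self)
      _ = y + l.sum := add_comm _ _

private lemma aux_exists_min : ∀ (l : List M), l ≠ [] → ∃ c ∈ l, ∀ y ∈ l, c ≤ y := by
  intro l
  induction l with
  | nil => intro h; exact absurd rfl h
  | cons u l ihl =>
      intro _
      by_cases hl : l = []
      · subst hl
        exact ⟨u, List.mem_cons_self, by simp⟩
      · obtain ⟨c, hc, hcm⟩ := ihl hl
        rcases le_total u c with h1 | h1
        · refine ⟨u, List.mem_cons_self, ?_⟩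
          intro y hy
          rcases List.mem_cons.mp hy with rfl | hy
          · exact le_rfl
          · exact h1.trans (hcm y hy)
        · refine ⟨c, List.mem_cons_of_mem _ hc, ?_⟩
          intro y hy
          rcases List.mem_cons.mp hy with rfl | hy
          · exact h1
          · exact hcm y hy

/-- The finite set of all sums of lists of length `≤ k` with entries in `S`. -/
private def sumsUpTo (S : Finset M) : ℕ → Finset M
  | 0 => {0}
  | (k + 1) => sumsUpTo S k ∪ Finset.image₂ (· + ·) S (sumsUpTo S k)

private lemma mem_sumsUpTo (S : Finset M) :
    ∀ (k : ℕ) (l : List M), (∀ t ∈ l, t ∈ S) → l.length ≤ k → l.sum ∈ sumsUpTo S k := by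
  intro k
  induction k with
  | zero =>
      intro l _ hlen
      rw [List.eq_nil_of_length_eq_zero (Nat.le_zero.mp hlen)]
      simp [sumsUpTo]
  | succ k ih =>
      intro l hl hlen
      cases l with
      | nil =>
          have h0 : ([] : List M).sum ∈ sumsUpTo S k := ih [] (by simp) (by simp)
          rw [sumsUpTo]
          exact Finset.mem_union_left _ h0
      | cons a l =>
          have ha : a ∈ S := hl a List.mem_cons_self
          have hsum : l.sum ∈ sumsUpTo S k :=
            ih l (fun t ht => hl t (List.mem_cons_of_mem _ ht)) (by simpa using hlen)
          rw [sumsUpTo]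
          exact Finset.mem_union_right _ (Finset.mem_image₂_of_mem ha hsum)

/-- Merging a sublist of the "false part" of a filter with the "true part". -/
private lemma aux_merge (p : M → Bool) :
    ∀ (e f'' : List M), f''.Sublist (e.filter (fun t => !(p t))) →
      ∃ f : List M, f.Sublist e ∧ f.Perm (e.filter p ++ f'') := by
  intro e
  induction e with
  | nil =>
      intro f'' h
      rw [List.filter_nil] at h
      rw [List.sublist_nil.mp h]
      exact ⟨[], List.Sublist.refl _, by simp⟩
  | cons a e ih =>
      intro f'' h
      by_cases hp : p a
      · rw [List.filter_cons_of_neg (by simp [hp])] at h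
        obtain ⟨f, hf, hm⟩ := ih f'' h
        refine ⟨a :: f, hf.cons₂ a, ?_⟩
        rw [List.filter_cons_of_pos hp, List.cons_append]
        exact hm.cons a
      · have hp' : p a = false := Bool.eq_false_iff.mpr hp
        rw [List.filter_cons_of_pos (by simp [hp'])] at h
        have hfp : (a :: e).filter p = e.filter p := List.filter_cons_of_neg (by simp [hp'])
        cases h with
        | cons _ h =>
            obtain ⟨f, hf, hm⟩ := ih f'' h
            exact ⟨f, hf.cons a, by rw [hfp]; exact hm⟩
        | cons_cons _ h =>
            rename_i g
            obtain ⟨f, hf, hm⟩ := ih g h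
            refine ⟨a :: f, hf.cons₂ a, ?_⟩
            rw [hfp]
            exact (hm.cons a).trans List.perm_middle.symm

/-- Main lemma: with offsets `x` from a finite set `X`, targets from `L`, and terms from `S`,
there is a uniform bound `n` such that we can find a short sublist `f` with
`m • a + (x + f.sum) < ℓ` for every deleted term `a` and every `m`. -/
private lemma aux_main (hzero : ∀ a : M, 0 ≤ a)
    (hmono : ∀ a b c d : M, a ≤ c → b ≤ d → a + b ≤ c + d) (L : Finset M) :
    ∀ S X : Finset M, ∃ n : ℕ, ∀ ℓ ∈ L, ∀ x ∈ X, ∀ e : List M, (∀ t ∈ e, t ∈ S) →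
      x + e.sum < ℓ → ∃ f : List M, f.Sublist e ∧ f.length < n ∧
        ∀ a ∈ ((e : Multiset M) - (f : Multiset M)), ∀ m : ℕ, m • a + (x + f.sum) < ℓ := by
  classical
  intro S
  induction S using Finset.strongInduction with
  | _ S IH =>
  intro X
  rcases S.eq_empty_or_nonempty with hS | hS
  · -- S empty: every valid e is empty
    refine ⟨1, fun ℓ hℓ x hx e he hsum => ?_⟩
    have : e = [] := List.eq_nil_iff_forall_not_mem.mpr fun t ht => by
      simpa [hS] using he t ht
    subst this
    exact ⟨[], List.Sublist.refl _, by simp, by simp⟩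
  · -- S nonempty
    set sm := S.max' hS with hsm
    set p : M → Bool := fun t => decide (blockRel sm t) with hp
    -- the ratio bound R
    set g : M → M → ℕ := fun u v => if h : ∃ k : ℕ, u ≤ k • v then h.choose else 0 with hg
    set R : ℕ := 1 + (S ×ˢ S).sup (fun q => g q.1 q.2) with hR
    have hRone : 1 ≤ R := Nat.le_add_right 1 _
    have hRspec : ∀ u ∈ S, ∀ v ∈ S, (∃ k : ℕ, u ≤ k • v) → u ≤ R • v := by
      intro u hu v hv hk
      have h1 : u ≤ (g u v) • v := by
        rw [hg]; simp only [dif_pos hk]; exact hk.choose_spec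
      refine h1.trans (aux_smul_le_smul_nat hzero hmono ?_ v)
      have h2 : g u v ≤ (S ×ˢ S).sup (fun q => g q.1 q.2) :=
        Finset.le_sup (f := fun q => g q.1 q.2)
          (show ((u, v) : M × M) ∈ S ×ˢ S from Finset.mem_product.mpr ⟨hu, hv⟩)
      omega
    -- the bound on minimal witnesses m with ℓ ≤ m • a + x
    set g2 : M → M → M → ℕ := fun ℓ x a =>
      if h : ∃ m : ℕ, ℓ ≤ m • a + x then h.choose else 0 with hg2
    set M₀ : ℕ := (L ×ˢ X ×ˢ S).sup (fun q => g2 q.1 q.2.1 q.2.2) with hM₀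
    set T : ℕ := M₀ * R + 1 with hT
    -- the smaller set S'' and the new offset set X'
    set S'' : Finset M := S.filter (fun a => ¬ blockRel sm a) with hS''
    have hSsub : S'' ⊂ S := by
      refine Finset.filter_ssubset.mpr ⟨sm, S.max'_mem hS, ?_⟩
      simp only [not_not]
      exact ⟨⟨1, one_pos, (one_nsmul sm).ge⟩, ⟨1, one_pos, (one_nsmul sm).ge⟩⟩
    set X' : Finset M := Finset.image₂ (· + ·) X (sumsUpTo S T) with hX'
    obtain ⟨n'', hn''⟩ := IH S'' hSsub X'
    refine ⟨T + n'' + 1, fun ℓ hℓ x hx e he hsum => ?_⟩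
    by_cases hcase : ∃ a ∈ e, ∃ m : ℕ, ℓ ≤ m • a + x
    · -- Case B: keep the whole top block and recurse
      obtain ⟨a0, ha0e, ha0⟩ := hcase
      set eB : List M := e.filter p with heB
      set e'' : List M := e.filter (fun t => !(p t)) with he''
      have hperm : (eB ++ e'').Perm e := List.filter_append_perm p e
      have hesum : eB.sum + e''.sum = e.sum := by
        have := hperm.sum_eq
        rwa [List.sum_append] at this
      have heBS : ∀ t ∈ eB, t ∈ S := fun t ht => he t (List.mem_of_mem_filter ht)
      have heBblock : ∀ t ∈ eB, blockRel sm t := by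
        intro t ht
        have := List.of_mem_filter ht
        simpa [hp] using this
      -- bound the length of eB
      have hlenB : eB.length < T := by
        by_cases hnil : eB = []
        · rw [hnil]
          simp only [List.length_nil, hT]
          omega
        · -- eB nonempty; take its minimum c
          obtain ⟨c, hceB, hcmin⟩ := aux_exists_min eB hnil
          have hcS : c ∈ S := heBS c hceB
          have hcblock : blockRel sm c := heBblock c hceB
          -- a0 ≤ R • c
          have ha0S : a0 ∈ S := he a0 ha0e
          have ha0Rc : a0 ≤ R • c := by
            by_cases hb : blockRel sm a0
            · -- same block: a0 ≤ m • sm ≤ m • (n • c)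
              obtain ⟨⟨m1, _, hm1⟩, _⟩ := hb
              obtain ⟨_, ⟨n1, _, hn1⟩⟩ := hcblock
              refine hRspec a0 ha0S c hcS ⟨m1 * n1, ?_⟩
              calc a0 ≤ m1 • sm := hm1
              _ ≤ m1 • (n1 • c) := aux_smul_le_smul hmono hn1 m1
              _ = (m1 * n1) • c := (mul_nsmul' c m1 n1).symm
            · -- lower block: a0 ≤ c
              have hac : a0 ≤ c := by
                by_contra hlt
                push_neg at hlt
                refine hb ⟨⟨1, one_pos, ?_⟩, ?_⟩
                · rw [one_nsmul]; exact S.le_max' a0 ha0S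
                · obtain ⟨_, ⟨n1, hn1p, hn1⟩⟩ := hcblock
                  exact ⟨n1, hn1p, hn1.trans (aux_smul_le_smul hmono hlt.le n1)⟩
              calc a0 ≤ c := hac
              _ = 1 • c := (one_nsmul c).symm
              _ ≤ R • c := aux_smul_le_smul_nat hzero hmono hRone c
          -- the minimal witness m₀ is bounded by M₀
          have hex : ∃ m : ℕ, ℓ ≤ m • a0 + x := ha0
          set m₀ : ℕ := g2 ℓ x a0 with hm₀
          have hm₀spec : ℓ ≤ m₀ • a0 + x := by
            rw [hm₀, hg2]; simp only [dif_pos hex]; exact hex.choose_spec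
          have hm₀le : m₀ ≤ M₀ :=
            Finset.le_sup (f := fun q => g2 q.1 q.2.1 q.2.2)
              (show ((ℓ, (x, a0)) : M × M × M) ∈ L ×ˢ X ×ˢ S from
                Finset.mem_product.mpr ⟨hℓ, Finset.mem_product.mpr ⟨hx, ha0S⟩⟩)
          -- counting argument
          by_contra hlen
          push_neg at hlen
          have htT : M₀ * R + 1 ≤ eB.length := by
            rw [hT] at hlen; exact hlen
          have hchain : ℓ ≤ x + eB.length • c := by
            calc ℓ ≤ m₀ • a0 + x := hm₀spec
            _ ≤ m₀ • (R • c) + x := hmono _ _ _ _ (aux_smul_le_smul hmono ha0Rc m₀) le_rfl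
            _ = (m₀ * R) • c + x := by rw [mul_nsmul']
            _ ≤ eB.length • c + x := by
                refine hmono _ _ _ _ (aux_smul_le_smul_nat hzero hmono ?_ c) le_rfl
                calc m₀ * R ≤ M₀ * R := Nat.mul_le_mul_right R hm₀le
                _ ≤ eB.length := by omega
            _ = x + eB.length • c := add_comm _ _
          have hother : x + eB.length • c ≤ x + e.sum := by
            refine hmono _ _ _ _ le_rfl ?_
            calc eB.length • c ≤ eB.sum := aux_length_smul_le_sum hmono eB hcmin
            _ ≤ eB.sum + e''.sum := aux_le_add_right hzero hmono _ _
            _ = e.sum := hesum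
          exact absurd hsum (not_lt.mpr (hchain.trans hother))
      -- recurse on e''
      have he''S : ∀ t ∈ e'', t ∈ S'' := by
        intro t ht
        have h1 : t ∈ S := he t (List.mem_of_mem_filter ht)
        have h2 := List.of_mem_filter ht
        rw [hS'', Finset.mem_filter]
        refine ⟨h1, ?_⟩
        simpa [hp] using h2
      set x' : M := x + eB.sum with hx'
      have hx'X : x' ∈ X' := by
        rw [hX']
        exact Finset.mem_image₂_of_mem hx (mem_sumsUpTo S T eB heBS (le_of_lt hlenB))
      have hsum'' : x' + e''.sum < ℓ := by
        rw [hx', add_assoc, hesum]; exact hsum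
      obtain ⟨f'', hf''sub, hf''len, hf''⟩ := hn'' ℓ hℓ x' hx'X e'' he''S hsum''
      obtain ⟨f, hfsub, hfm⟩ := aux_merge p e f'' hf''sub
      have hfmm : (f : Multiset M) = (eB : Multiset M) + (f'' : Multiset M) :=
        (Multiset.coe_eq_coe.mpr hfm).trans (by simp; exact List.Perm.refl _)
      refine ⟨f, hfsub, ?_, ?_⟩
      · -- length
        have hfl : f.length = eB.length + f''.length := by
          rw [hfm.length_eq, List.length_append]
        omega
      · -- guarantee
        intro a ha m
        have heq : (e : Multiset M) - (f : Multiset M)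
            = (e'' : Multiset M) - (f'' : Multiset M) := by
          have heQ : (e : Multiset M) = (eB : Multiset M) + (e'' : Multiset M) := by
            rw [← Multiset.coe_eq_coe.mpr hperm]
            simp
          rw [heQ, hfmm]
          ext b
          simp only [Multiset.count_sub, Multiset.count_add]
          omega
        rw [heq] at ha
        have hlt := hf'' a ha m
        have hfsum : f.sum = eB.sum + f''.sum := by
          rw [hfm.sum_eq, List.sum_append]
        calc m • a + (x + f.sum) = m • a + (x' + f''.sum) := by
              rw [hfsum, hx', add_assoc]
        _ < ℓ := hlt
    · -- Case A: delete everything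
      push_neg at hcase
      refine ⟨[], List.nil_sublist e, by simp only [List.length_nil]; omega, ?_⟩
      intro a ha m
      simp only [Multiset.coe_nil, Multiset.sub_zero, Multiset.mem_coe] at ha
      have := hcase a ha m
      simpa using this

end Aux

/-- Important and unimportant summands: for a distance monoid with finitely many
blocks and a finite `S ⊆ M \ {0}`, there is `n = n(S)` such that every sequence
`(e_i)` of elements of `S` with `ℓ ≻ e_1 ⊕ ⋯ ⊕ e_k` (`ℓ ∈ S`) has a subsequence
`(f_i)` of length `< n` such that, if `(f_i)` is proper and `a` is the `⪯`-largest
deleted term, then `ℓ ≻ b ⊕ f_1 ⊕ ⋯ ⊕ f_m` for every `b` in the block of `a`. -/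
theorem exists_important_subsequence {M : Type*} [AddCommMonoid M] [LinearOrder M]
    (hzero : ∀ a : M, 0 ≤ a)
    (hmono : ∀ a b c d : M, a ≤ c → b ≤ d → a + b ≤ c + d)
    (hfinblocks :
      {B : Set M | ∃ a : M, a ≠ 0 ∧ B = {x : M | x ≠ 0 ∧ blockRel a x}}.Finite)
    (S : Finset M) (hS : ∀ x ∈ S, x ≠ 0) :
    ∃ n : ℕ, ∀ ℓ ∈ S, ∀ e : List M, (∀ x ∈ e, x ∈ S) → e.sum < ℓ →
      ∃ f : List M, f.Sublist e ∧ f.length < n ∧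
        ∀ a : M, a ∈ ((e : Multiset M) - (f : Multiset M)) →
          (∀ x ∈ ((e : Multiset M) - (f : Multiset M)), x ≤ a) →
          ∀ b : M, b ≠ 0 → blockRel a b → b + f.sum < ℓ := by
  obtain ⟨n, hn⟩ := aux_main hzero hmono S S {0}
  refine ⟨n, fun ℓ hℓ e he hsum => ?_⟩
  obtain ⟨f, hfsub, hflen, hf⟩ := hn ℓ hℓ 0 (Finset.mem_singleton_self 0) e he
    (by rwa [zero_add])
  refine ⟨f, hfsub, hflen, fun a ha _ b _ hab => ?_⟩
  obtain ⟨⟨m, _, hm⟩, _⟩ := hab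
  calc b + f.sum ≤ m • a + f.sum := hmono _ _ _ _ hm le_rfl
  _ = m • a + (0 + f.sum) := by rw [zero_add]
  _ < ℓ := hf a ha m
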